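/- arXiv:1812.00038 — 2 statements merged into one kernel-verified Lean document; each statement's English description precedes it below -/
import Mathlib

section
/- Let η and ν be two fundamental symmetries on a Krein space K. Then there exists a bounded Krein-unitary operator U with bounded inverse, positive definite with respect to ⟨·,·⟩_η, such that ν = U^× η U. (Concretely, U is the positive square root of the bounded positive operator H = ην with respect to the η-inner product.) -/
set_option maxHeartbeats 1000000
set_option synthInstance.maxHeartbeats 400000

open scoped InnerProductSpace

theorem krein_aux {E : Type*} [NormedAddCommGroup E] [InnerProductSpace ℂ E]
    [CompleteSpace E] (e h : E →L[ℂ] E)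
    (he : ∀ x y : E, ⟪e x, y⟫_ℂ = ⟪x, e y⟫_ℂ)
    (he2 : e * e = 1)
    (hh : ∀ x y : E, ⟪h x, y⟫_ℂ = ⟪x, h y⟫_ℂ)
    (hpos : ∀ x : E, 0 ≤ (⟪x, h x⟫_ℂ).re)
    (hn : (e * h) * (e * h) = 1) :
    ∃ U : E →L[ℂ] E, Function.Bijective U ∧
      (∀ x : E, U (U x) = h x) ∧
      (∀ x y : E, ⟪U x, y⟫_ℂ = ⟪x, U y⟫_ℂ) ∧
      (∀ x : E, U (e (U x)) = e x) ∧
      (∀ x : E, x ≠ 0 → 0 < (⟪x, U x⟫_ℂ).re) ∧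
      ∃ c C : ℝ, (∀ x, ‖U x‖ ≤ c * ‖x‖) ∧ (∀ x, ‖x‖ ≤ C * ‖U x‖) := by
  have hhsa : IsSelfAdjoint h :=
    ContinuousLinearMap.isSelfAdjoint_iff_isSymmetric.mpr fun x y => hh x y
  have hesa : IsSelfAdjoint e :=
    ContinuousLinearMap.isSelfAdjoint_iff_isSymmetric.mpr fun x y => he x y
  have h0 : (0 : E →L[ℂ] E) ≤ h := by
    rw [ContinuousLinearMap.nonneg_iff_isPositive]
    refine ⟨fun x y => hh x y, fun x => ?_⟩
    show 0 ≤ RCLike.re ⟪h x, x⟫_ℂ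
    rw [hh x x, RCLike.re_to_complex]
    exact hpos x
  set hinv : E →L[ℂ] E := e * h * e with hinv_def
  have left : hinv * h = 1 := by rw [hinv_def, mul_assoc]; exact hn
  have right : h * hinv = 1 := by
    calc h * hinv = (e * e) * (h * hinv) := by rw [he2, one_mul]
      _ = e * ((e * h) * (e * h)) * e := by rw [hinv_def]; simp only [mul_assoc]
      _ = 1 := by rw [hn, mul_one, he2]
  set U : E →L[ℂ] E := CFC.sqrt h with U_def
  have hU0 : (0 : E →L[ℂ] E) ≤ U := CFC.sqrt_nonneg h
  have hUU : U * U = h := CFC.sqrt_mul_sqrt_self h h0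
  have hUsa : IsSelfAdjoint U := IsSelfAdjoint.of_nonneg hU0
  have hUsym : ∀ x y : E, ⟪U x, y⟫_ℂ = ⟪x, U y⟫_ℂ := fun x y =>
    ContinuousLinearMap.isSelfAdjoint_iff_isSymmetric.mp hUsa x y
  have hcomm : U * h = h * U := by rw [← hUU, mul_assoc]
  have hcomm' : U * hinv = hinv * U := by
    calc U * hinv = (hinv * h) * (U * hinv) := by rw [left, one_mul]
      _ = hinv * ((h * U) * hinv) := by simp only [mul_assoc]
      _ = hinv * ((U * h) * hinv) := by rw [hcomm]
      _ = (hinv * U) * (h * hinv) := by simp only [mul_assoc]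
      _ = hinv * U := by rw [right, mul_one]
  set V : E →L[ℂ] E := hinv * U with V_def
  have lem1 : V * U = 1 := by rw [V_def, mul_assoc, hUU]; exact left
  have lem2 : U * V = 1 := by rw [V_def, ← mul_assoc, hcomm', mul_assoc, hUU]; exact left
  have happly : ∀ {A B₂ : E →L[ℂ] E}, A = B₂ → ∀ x, A x = B₂ x := fun hAB x => by rw [hAB]
  have hlinv : ∀ x, V (U x) = x := fun x => by
    simpa [ContinuousLinearMap.mul_apply] using happly lem1 x
  have hrinv : ∀ x, U (V x) = x := fun x => by
    simpa [ContinuousLinearMap.mul_apply] using happly lem2 x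
  have hbij : Function.Bijective U :=
    ⟨Function.LeftInverse.injective hlinv, Function.RightInverse.surjective hrinv⟩
  have hVsa : IsSelfAdjoint V := by
    have hstar : star V = U * hinv := by
      rw [V_def, hinv_def]
      simp only [star_mul, hesa.star_eq, hhsa.star_eq, hUsa.star_eq, mul_assoc]
    rw [IsSelfAdjoint, hstar, hcomm']
  have hUpos : U.IsPositive := (ContinuousLinearMap.nonneg_iff_isPositive U).mp hU0
  have hV0 : (0 : E →L[ℂ] E) ≤ V := by
    rw [ContinuousLinearMap.nonneg_iff_isPositive]
    have hconj := hUpos.adjoint_conj V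
    rw [← ContinuousLinearMap.star_eq_adjoint, hVsa.star_eq] at hconj
    have heq : V ∘L U ∘L V = V := by
      ext x
      simp only [ContinuousLinearMap.comp_apply]
      rw [hrinv x]
    rwa [heq] at hconj
  have hb0 : (0 : E →L[ℂ] E) ≤ e * U * e := by
    rw [ContinuousLinearMap.nonneg_iff_isPositive]
    have hconj := hUpos.adjoint_conj e
    rw [← ContinuousLinearMap.star_eq_adjoint, hesa.star_eq] at hconj
    have heq : e ∘L U ∘L e = e * U * e := by ext x; rfl
    rwa [heq] at hconj
  have hbsq : (e * U * e) * (e * U * e) = hinv := by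
    calc (e * U * e) * (e * U * e) = e * (U * ((e * e) * (U * e))) := by simp only [mul_assoc]
      _ = e * (U * (U * e)) := by rw [he2, one_mul]
      _ = (e * (U * U)) * e := by simp only [mul_assoc]
      _ = hinv := by rw [hUU, hinv_def]
  have hVsq : V * V = hinv := by
    calc V * V = hinv * ((U * hinv) * U) := by rw [V_def]; simp only [mul_assoc]
      _ = hinv * ((hinv * U) * U) := by rw [hcomm']
      _ = (hinv * hinv) * (U * U) := by simp only [mul_assoc]
      _ = hinv * (hinv * h) := by rw [hUU]; simp only [mul_assoc]
      _ = hinv := by rw [left, mul_one]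
  have hkey : e * U * e = V := (CFC.sqrt_unique hbsq hb0).symm.trans (CFC.sqrt_unique hVsq hV0)
  have hUeU : U * (e * U) = e := by
    have h3 : U * (e * U * e) = 1 := by rw [hkey]; exact lem2
    calc U * (e * U) = U * (e * U) * (e * e) := by rw [he2, mul_one]
      _ = (U * (e * U * e)) * e := by simp only [mul_assoc]
      _ = e := by rw [h3, one_mul]
  have hUeUx : ∀ x, U (e (U x)) = e x := fun x => by
    simpa [ContinuousLinearMap.mul_apply] using happly hUeU x
  have hUUx : ∀ x, U (U x) = h x := fun x => by
    simpa [ContinuousLinearMap.mul_apply] using happly hUU x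
  set W : E →L[ℂ] E := CFC.sqrt U with W_def
  have hW0 : (0 : E →L[ℂ] E) ≤ W := CFC.sqrt_nonneg U
  have hWW : W * W = U := CFC.sqrt_mul_sqrt_self U hU0
  have hWsym : ∀ x y : E, ⟪W x, y⟫_ℂ = ⟪x, W y⟫_ℂ := fun x y =>
    ContinuousLinearMap.isSelfAdjoint_iff_isSymmetric.mp (IsSelfAdjoint.of_nonneg hW0) x y
  have hposU : ∀ x : E, x ≠ 0 → 0 < (⟪x, U x⟫_ℂ).re := by
    intro x hx
    have h1 : U x = W (W x) := by
      simpa [ContinuousLinearMap.mul_apply] using (happly hWW x).symm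
    have hWx : W x ≠ 0 := by
      intro hw
      apply hx
      have hUx : U x = 0 := by rw [h1, hw, map_zero]
      rw [← hlinv x, hUx, map_zero]
    have h2 : ⟪x, U x⟫_ℂ = ⟪W x, W x⟫_ℂ := by
      rw [h1]; exact (hWsym x (W x)).symm
    rw [h2]
    have h3 : RCLike.re ⟪W x, W x⟫_ℂ = ‖W x‖ * ‖W x‖ := inner_self_eq_norm_mul_norm (W x)
    rw [RCLike.re_to_complex] at h3
    rw [h3]
    exact mul_pos (norm_pos_iff.mpr hWx) (norm_pos_iff.mpr hWx)
  refine ⟨U, hbij, hUUx, hUsym, hUeUx, hposU, ‖U‖, ‖V‖, fun x => U.le_opNorm x, fun x => ?_⟩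
  calc ‖x‖ = ‖V (U x)‖ := by rw [hlinv x]
    _ ≤ ‖V‖ * ‖U x‖ := V.le_opNorm (U x)

/-- Any two fundamental symmetries η, ν of a Krein space are related by
`ν = U^× η U` for some bounded (with bounded inverse) Krein-unitary operator `U`
that is positive definite with respect to the η-inner product. -/
theorem fundamental_symmetries_krein_unitarily_equivalent
    {K : Type*} [AddCommGroup K] [Module ℂ K]
    (B : K →ₗ⋆[ℂ] K →ₗ[ℂ] ℂ)
    (hherm : ∀ x y : K, starRingEnd ℂ (B y x) = B x y)
    (hnondeg : ∀ x : K, (∀ y : K, B x y = 0) → x = 0)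
    (η ν : K →ₗ[ℂ] K)
    (hη2 : ∀ x, η (η x) = x) (hν2 : ∀ x, ν (ν x) = x)
    (hηsa : ∀ x y : K, B (η x) y = B x (η y))
    (hνsa : ∀ x y : K, B (ν x) y = B x (ν y))
    (hηpos : ∀ x : K, x ≠ 0 → 0 < (B x (η x)).re)
    (hνpos : ∀ x : K, x ≠ 0 → 0 < (B x (ν x)).re)
    -- K is a Krein space: it is complete for the η-norm
    (hηcomplete : ∀ f : ℕ → K,
      (∀ ε : ℝ, 0 < ε → ∃ M : ℕ, ∀ m ≥ M, ∀ n ≥ M,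
        Real.sqrt (B (f m - f n) (η (f m - f n))).re < ε) →
      ∃ x : K, ∀ ε : ℝ, 0 < ε → ∃ M : ℕ, ∀ n ≥ M,
        Real.sqrt (B (f n - x) (η (f n - x))).re < ε) :
    ∃ (U : K →ₗ[ℂ] K) (c C : ℝ),
      Function.Bijective U ∧
      -- U is a Krein isometry (hence, being bijective, Krein-unitary)
      (∀ x y : K, B (U x) (U y) = B x y) ∧
      -- U is bounded with bounded inverse for the η-norm
      (∀ x : K, Real.sqrt (B (U x) (η (U x))).re ≤ c * Real.sqrt (B x (η x)).re) ∧
      (∀ x : K, Real.sqrt (B x (η x)).re ≤ C * Real.sqrt (B (U x) (η (U x))).re) ∧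
      -- U is positive definite with respect to ⟨·,·⟩_η
      (∀ x : K, x ≠ 0 → 0 < (B x (η (U x))).re) ∧
      -- ν = U^× η U, expressed as (y, ν x) = (U y, η U x) for all x, y
      (∀ x y : K, B y (ν x) = B (U y) (η (U x))) := by
  letI core : InnerProductSpace.Core ℂ K :=
  { inner := fun x y => B x (η y)
    conj_inner_symm := fun x y => by
      show starRingEnd ℂ (B y (η x)) = B x (η y)
      rw [hherm (η x) y, hηsa x y]
    re_inner_nonneg := fun x => by
      show (0:ℝ) ≤ RCLike.re (B x (η x))
      rw [RCLike.re_to_complex]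
      rcases eq_or_ne x 0 with rfl | hx
      · simp
      · exact (hηpos x hx).le
    add_left := fun x y z => by
      show B (x + y) (η z) = B x (η z) + B y (η z)
      rw [map_add, LinearMap.add_apply]
    smul_left := fun x y r => by
      show B (r • x) (η y) = starRingEnd ℂ r * B x (η y)
      rw [map_smulₛₗ, LinearMap.smul_apply, smul_eq_mul]
    definite := fun x hx => by
      by_contra h'
      have h1 := hηpos x h'
      have h2 : B x (η x) = 0 := hx
      rw [h2] at h1
      simp at h1 }
  letI : NormedAddCommGroup K := core.toNormedAddCommGroup
  letI : InnerProductSpace ℂ K := InnerProductSpace.ofCore core.toCore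
  have hBin : ∀ x y : K, ⟪x, y⟫_ℂ = B x (η y) := fun x y => rfl
  have hnorm : ∀ x : K, ‖x‖ = Real.sqrt (B x (η x)).re := fun x => rfl
  haveI : CompleteSpace K := by
    apply Metric.complete_of_cauchySeq_tendsto
    intro u hu
    obtain ⟨x, hx⟩ := hηcomplete u (by
      intro ε hε
      obtain ⟨N, hN⟩ := Metric.cauchySeq_iff.mp hu ε hε
      refine ⟨N, fun m hm n hn => ?_⟩
      have := hN m hm n hn
      rwa [dist_eq_norm, hnorm] at this)
    refine ⟨x, Metric.tendsto_atTop.mpr fun ε hε => ?_⟩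
    obtain ⟨N, hN⟩ := hx ε hε
    exact ⟨N, fun n hn => by rw [dist_eq_norm, hnorm]; exact hN n hn⟩
  have hηnorm : ∀ x : K, ‖η x‖ ≤ 1 * ‖x‖ := fun x => by
    rw [one_mul, hnorm, hnorm]
    have hbe : B (η x) (η (η x)) = B x (η x) := by rw [hη2, hηsa]
    rw [hbe]
  let ηc : K →L[ℂ] K := LinearMap.mkContinuous η 1 hηnorm
  have hHsymm : (η ∘ₗ ν).IsSymmetric := by
    intro x y
    show B (η (ν x)) (η y) = B x (η (η (ν y)))
    rw [hη2, hηsa, hη2, hνsa]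
  let Hc : K →L[ℂ] K := ⟨η ∘ₗ ν, hHsymm.continuous⟩
  have he : ∀ x y : K, ⟪ηc x, y⟫_ℂ = ⟪x, ηc y⟫_ℂ := fun x y => hηsa x (η y)
  have he2 : ηc * ηc = 1 := by
    ext x
    show η (η x) = x
    exact hη2 x
  have hh : ∀ x y : K, ⟪Hc x, y⟫_ℂ = ⟪x, Hc y⟫_ℂ := fun x y => hHsymm x y
  have hpos : ∀ x : K, 0 ≤ (⟪x, Hc x⟫_ℂ).re := fun x => by
    have h1 : ⟪x, Hc x⟫_ℂ = B x (ν x) := by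
      show B x (η (η (ν x))) = B x (ν x)
      rw [hη2]
    rw [h1]
    rcases eq_or_ne x 0 with rfl | hx
    · simp
    · exact (hνpos x hx).le
  have hn : (ηc * Hc) * (ηc * Hc) = 1 := by
    ext x
    show η (η (ν (η (η (ν x))))) = x
    rw [hη2, hη2, hν2]
  obtain ⟨U, hbij, hUU, hUsym, hUeU, hposU, c, C, hc, hC⟩ := krein_aux ηc Hc he he2 hh hpos hn
  refine ⟨U.toLinearMap, c, C, hbij, ?_, ?_, ?_, ?_, ?_⟩
  · intro x y
    simp only [ContinuousLinearMap.coe_coe]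
    have h1 : B (U x) (U y) = ⟪(U x : K), ηc (U y)⟫_ℂ := by
      show B (U x) (U y) = B (U x) (η (η (U y)))
      rw [hη2]
    rw [h1, hUsym, hUeU]
    show B x (η (η y)) = B x y
    rw [hη2]
  · intro x
    have := hc x
    rwa [hnorm, hnorm] at this
  · intro x
    have := hC x
    rwa [hnorm, hnorm] at this
  · intro x hx
    exact hposU x hx
  · intro x y
    simp only [ContinuousLinearMap.coe_coe]
    have h1 : B y (ν x) = ⟪y, Hc x⟫_ℂ := by
      show B y (ν x) = B y (η (η (ν x)))
      rw [hη2]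
    have h2 : B (U y) (η (U x)) = ⟪(U y : K), (U x : K)⟫_ℂ := rfl
    rw [h1, h2, ← hUU x]
    exact (hUsym y (U x)).symm
end

section
/- A real vector space V of finite dimension d equipped with a nondegenerate symmetric bilinear form g of signature (q, p) (q negative directions, p positive directions, q + p = d) admits an orthogonal complex structure C (a linear map with C² = −1 and g(Cu, Cv) = g(u,v) for all u,v) if and only if both q and p are even. -/
namespace OCSAux

def tau (k : ℕ) : ℕ := if k % 2 = 0 then k + 1 else k - 1

lemma tau_lt {n k : ℕ} (hn : n % 2 = 0) (hk : k < n) : tau k < n := by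
  unfold tau; split_ifs with h <;> omega

lemma tau_tau (k : ℕ) : tau (tau k) = k := by
  unfold tau
  by_cases h : k % 2 = 0
  · rw [if_pos h, if_neg (by omega)]; omega
  · rw [if_neg h, if_pos (by omega)]; omega

lemma tau_lt_iff {q k : ℕ} (hq : q % 2 = 0) : tau k < q ↔ k < q := by
  unfold tau; split_ifs with h <;> omega

lemma tau_mod (k : ℕ) : tau k % 2 = 1 - k % 2 := by
  unfold tau; split_ifs with h <;> omega

end OCSAux

open OCSAux in
/-- A real vector space with a nondegenerate symmetric bilinear form of signature
`(q, p)` admits an orthogonal complex structure iff both `q` and `p` are even. -/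
theorem orthogonal_complex_structure_iff_even_even
    {V : Type*} [AddCommGroup V] [Module ℝ V] (q p : ℕ)
    (g : V →ₗ[ℝ] V →ₗ[ℝ] ℝ)
    -- g has signature (q, p): there is a pseudo-orthonormal basis
    (b : Module.Basis (Fin (q + p)) ℝ V)
    (hb : ∀ i j, g (b i) (b j) =
      if i = j then (if (i : ℕ) < q then (-1 : ℝ) else 1) else 0) :
    (∃ C : V →ₗ[ℝ] V, (∀ v, C (C v) = -v) ∧ ∀ u v, g (C u) (C v) = g u v)
      ↔ (Even q ∧ Even p) := by
  haveI : Module.Finite ℝ V := Module.Finite.of_basis b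
  have hdim : Module.finrank ℝ V = q + p := by
    rw [Module.finrank_eq_card_basis b, Fintype.card_fin]
  have key : ∀ c c' : Fin (q+p) → ℝ,
      g (∑ i, c i • b i) (∑ j, c' j • b j)
        = ∑ i : Fin (q+p), (if (i:ℕ) < q then (-1:ℝ) else 1) * (c i * c' i) := by
    intro c c'
    simp only [map_sum, map_smul, LinearMap.sum_apply, LinearMap.smul_apply,
      smul_eq_mul, hb]
    refine Finset.sum_congr rfl fun i _ => ?_
    rw [Finset.sum_eq_single i]
    · simp only [if_pos rfl]; split_ifs <;> ring
    · intro j _ hji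
      simp [hji]
    · intro h; exact absurd (Finset.mem_univ i) h
  have gsymm : ∀ x y, g x y = g y x := by
    intro x y
    have hx := b.sum_equivFun x
    have hy := b.sum_equivFun y
    have h1 := key (b.equivFun x) (b.equivFun y)
    have h2 := key (b.equivFun y) (b.equivFun x)
    rw [hx, hy] at h1 h2
    rw [h1, h2]
    exact Finset.sum_congr rfl fun i _ => by ring
  constructor
  · rintro ⟨C, hC2, hCg⟩
    -- dimension is even
    have hCC : (C ∘ₗ C) = -(LinearMap.id (R := ℝ) (M := V)) := by
      ext v; simp [hC2 v]
    have hdet : (LinearMap.det C) ^ 2 = (-1 : ℝ) ^ (q + p) := by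
      have h1 : LinearMap.det (C ∘ₗ C) = (LinearMap.det C) ^ 2 := by
        rw [LinearMap.det_comp]; ring
      have h2 : LinearMap.det (-(LinearMap.id (R := ℝ) (M := V))) = (-1 : ℝ) ^ (q + p) := by
        have : -(LinearMap.id (R := ℝ) (M := V)) = (-1 : ℝ) • LinearMap.id := by
          ext v; simp
        rw [this, LinearMap.det_smul, hdim, LinearMap.det_id, mul_one]
      rw [← h1, hCC, h2]
    have hEvenN : Even (q + p) := by
      by_contra h
      rw [(Nat.not_even_iff_odd.mp h).neg_one_pow] at hdet
      nlinarith [sq_nonneg (LinearMap.det C)]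
    -- no (q+1)-dimensional negative families
    have noBig : ∀ f : Fin (q+1) → V,
        (∀ d : Fin (q+1) → ℝ, d ≠ 0 →
          g (∑ i, d i • f i) (∑ i, d i • f i) < 0) → False := by
      intro f hf
      set φ : V →ₗ[ℝ] (Fin q → ℝ) :=
        LinearMap.pi (fun i : Fin q => b.coord (Fin.castAdd p i)) with hφ
      have hnotli : ¬ LinearIndependent ℝ (fun i => φ (f i)) := by
        intro hli
        have := hli.fintype_card_le_finrank
        rw [Fintype.card_fin, Module.finrank_pi] at this
        simp [Fintype.card_fin] at this
      obtain ⟨d, hd0, hdne⟩ := Fintype.not_linearIndependent_iff.mp hnotli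
      have hdne' : d ≠ 0 := by
        obtain ⟨i, hi⟩ := hdne
        intro h; exact hi (by rw [h]; rfl)
      set w := ∑ i, d i • f i with hw
      have hφw : φ w = 0 := by
        rw [hw, map_sum]
        simpa [map_smul] using hd0
      have hrepr : ∀ k : Fin (q+p), (k:ℕ) < q → b.repr w k = 0 := by
        intro k hk
        have h1 := congrFun hφw ⟨(k:ℕ), hk⟩
        have h2 : Fin.castAdd p (⟨(k:ℕ), hk⟩ : Fin q) = k := by
          apply Fin.ext; rfl
        simpa [hφ, Module.Basis.coord_apply, h2] using h1
      have hww : 0 ≤ g w w := by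
        have h1 := key (b.equivFun w) (b.equivFun w)
        rw [b.sum_equivFun w] at h1
        rw [h1]
        apply Finset.sum_nonneg
        intro k _
        by_cases hk : (k:ℕ) < q
        · simp [hk, Module.Basis.equivFun_apply, hrepr k hk]
        · rw [if_neg hk, one_mul]; exact mul_self_nonneg _
      have := hf d hdne'
      linarith
    have hq : Even q := by
      by_contra hodd
      have hqodd : Odd q := Nat.not_even_iff_odd.mp hodd
      set e : Fin q → V := fun i => b (Fin.castAdd p i) with he
      have hgee : ∀ k l : Fin q, g (e k) (e l) = if k = l then (-1:ℝ) else 0 := by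
        intro k l
        rw [he, hb]
        have hcoe : ((Fin.castAdd p k : Fin (q+p)) : ℕ) = (k : ℕ) := rfl
        by_cases hkl : k = l
        · subst hkl
          rw [if_pos rfl, if_pos rfl, if_pos (by rw [hcoe]; exact k.isLt)]
        · rw [if_neg (fun h => hkl (by simpa [Fin.ext_iff] using h)), if_neg hkl]
      -- the skew Gram matrix
      set A : Matrix (Fin q) (Fin q) ℝ := Matrix.of fun i j => g (C (e i)) (e j) with hA
      have hskewpt : ∀ x y : V, g (C x) y = - g (C y) x := by
        intro x y
        have h1 : g (C (C x)) (C y) = g (C x) y := hCg (C x) y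
        rw [hC2 x, map_neg, LinearMap.neg_apply] at h1
        rw [← h1, gsymm x (C y)]
      have hdetA : A.det = 0 := by
        have hAt : A.transpose = -A := by
          ext i j
          show A j i = - A i j
          exact hskewpt (e j) (e i)
        have h1 : A.det = (-1:ℝ) ^ q * A.det := by
          conv_lhs => rw [← Matrix.det_transpose, hAt]
          rw [Matrix.det_neg, Fintype.card_fin]
        rw [hqodd.neg_one_pow] at h1
        linarith
      obtain ⟨c, hc0, hcA⟩ := Matrix.exists_mulVec_eq_zero_iff.mpr
        (show (A.transpose).det = 0 by rw [Matrix.det_transpose]; exact hdetA)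
      set u : V := ∑ k, c k • e k with hu
      have hCu : ∀ j, g (C u) (e j) = 0 := by
        intro j
        have h1 := congrFun hcA j
        have h2 : (A.transpose).mulVec c j = ∑ k, g (C (e k)) (e j) * c k := by
          rw [Matrix.mulVec]; rfl
        have h3 : g (C u) (e j) = ∑ k, g (C (e k)) (e j) * c k := by
          rw [hu, map_sum, map_sum, LinearMap.sum_apply]
          exact Finset.sum_congr rfl fun k _ => by
            rw [map_smul, map_smul, LinearMap.smul_apply]; simp; ring
        rw [h3, ← h2, h1]; rfl
      have hneg : ∀ c' : Fin q → ℝ,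
          g (∑ k, c' k • e k) (∑ k, c' k • e k) = -∑ k, (c' k)^2 := by
        intro c'
        simp only [map_sum, map_smul, LinearMap.sum_apply, LinearMap.smul_apply,
          smul_eq_mul, hgee]
        rw [← Finset.sum_neg_distrib]
        refine Finset.sum_congr rfl fun k _ => ?_
        rw [Finset.sum_eq_single k]
        · norm_num [pow_two]
        · intro l _ hlk
          simp [hlk]
        · intro h; exact absurd (Finset.mem_univ k) h
      have hcpos : 0 < ∑ k, (c k)^2 := by
        obtain ⟨k, hk⟩ := Function.ne_iff.mp hc0
        apply Finset.sum_pos' (fun i _ => sq_nonneg _)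
        exact ⟨k, Finset.mem_univ k,
          lt_of_le_of_ne (sq_nonneg _) (Ne.symm (pow_ne_zero 2 hk))⟩
      have huu : g u u = -∑ k, (c k)^2 := hneg c
      have hCuCu : g (C u) (C u) = g u u := hCg u u
      -- build the (q+1)-family
      apply noBig (Fin.snoc e (C u))
      intro d hd
      rw [Fin.sum_univ_castSucc]
      simp only [Fin.snoc_castSucc, Fin.snoc_last]
      set t := d (Fin.last q) with ht
      set v := ∑ i : Fin q, d i.castSucc • e i with hv
      have hgv : g (C u) v = 0 := by
        rw [hv, map_sum]
        refine Finset.sum_eq_zero fun i _ => ?_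
        rw [map_smul]; simp [hCu i]
      have hgv' : g v (C u) = 0 := by rw [gsymm]; exact hgv
      have expand : g (v + t • C u) (v + t • C u)
          = g v v + t^2 * g (C u) (C u) := by
        simp only [map_add, map_smul, LinearMap.add_apply, LinearMap.smul_apply,
          smul_eq_mul]
        rw [hgv, hgv']
        ring
      rw [expand, hCuCu, huu]
      have hvv : g v v = -∑ i : Fin q, (d i.castSucc)^2 := hneg _
      rw [hvv]
      have hsum0 : (0:ℝ) ≤ ∑ i : Fin q, (d i.castSucc)^2 :=
        Finset.sum_nonneg fun i _ => sq_nonneg _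
      -- some coefficient is nonzero
      have : t ≠ 0 ∨ 0 < ∑ i : Fin q, (d i.castSucc)^2 := by
        by_cases htz : t = 0
        · right
          obtain ⟨i, hi⟩ := Function.ne_iff.mp hd
          have hj' : ∃ j : Fin q, d j.castSucc ≠ 0 := by
            rcases Fin.eq_castSucc_or_eq_last i with ⟨j, rfl⟩ | rfl
            · exact ⟨j, hi⟩
            · exact absurd htz hi
          obtain ⟨j, hj⟩ := hj'
          apply Finset.sum_pos' (fun i _ => sq_nonneg _)
          exact ⟨j, Finset.mem_univ j,
            lt_of_le_of_ne (sq_nonneg _) (Ne.symm (pow_ne_zero 2 hj))⟩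
        · left; exact htz
      rcases this with htnz | hpos
      · nlinarith [lt_of_le_of_ne (sq_nonneg t) (Ne.symm (pow_ne_zero 2 htnz)),
          hcpos, hsum0]
      · nlinarith [sq_nonneg t, hcpos, hpos]
    exact ⟨hq, (Nat.even_add.mp hEvenN).mp hq⟩
  · rintro ⟨hq, hp⟩
    have hq2 : q % 2 = 0 := Nat.even_iff.mp hq
    have hp2 : p % 2 = 0 := Nat.even_iff.mp hp
    have hn2 : (q + p) % 2 = 0 := by omega
    set σ : Fin (q+p) → Fin (q+p) := fun i => ⟨tau i, tau_lt hn2 i.isLt⟩ with hσ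
    have hσσ : ∀ i, σ (σ i) = i := fun i => Fin.ext (tau_tau i)
    have hσinj : Function.Injective σ := Function.Involutive.injective hσσ
    have hσlt : ∀ i : Fin (q+p), ((σ i : Fin (q+p)) : ℕ) < q ↔ (i:ℕ) < q :=
      fun i => tau_lt_iff hq2
    have hσmod : ∀ i : Fin (q+p), ((σ i : Fin (q+p)) : ℕ) % 2 = 1 - (i:ℕ) % 2 :=
      fun i => tau_mod i
    set im : Fin (q+p) → V := fun i =>
      if (i:ℕ) % 2 = 0 then b (σ i) else -b (σ i) with him
    set C := b.constr ℝ im with hC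
    have hCb : ∀ i, C (b i) = im i := fun i => b.constr_basis ℝ im i
    refine ⟨C, ?_, ?_⟩
    · have hbasis : ∀ i, C (C (b i)) = -(b i) := by
        intro i
        by_cases h : (i:ℕ) % 2 = 0
        · rw [hCb, him]
          simp only [if_pos h]
          rw [hCb, him]
          have : ((σ i : Fin (q+p)) : ℕ) % 2 ≠ 0 := by rw [hσmod]; omega
          simp only [if_neg this, hσσ]
        · rw [hCb, him]
          simp only [if_neg h]
          rw [map_neg, hCb, him]
          have : ((σ i : Fin (q+p)) : ℕ) % 2 = 0 := by rw [hσmod]; omega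
          simp only [if_pos this, hσσ]
      intro v
      have heq : (C ∘ₗ C) = -(LinearMap.id (R := ℝ) (M := V)) :=
        b.ext fun i => by simpa using hbasis i
      have := LinearMap.congr_fun heq v
      simpa using this
    · have hpair : ∀ i j, g (C (b i)) (C (b j)) = g (b i) (b j) := by
        intro i j
        have hij : (i:ℕ) % 2 ≠ (j:ℕ) % 2 → i ≠ j := by
          intro h hij; exact h (by rw [hij])
        rw [hCb, hCb, him]
        by_cases hi : (i:ℕ) % 2 = 0 <;> by_cases hj : (j:ℕ) % 2 = 0
        · simp only [if_pos hi, if_pos hj]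
          rw [hb, hb]
          simp only [hσinj.eq_iff, hσlt]
        · simp only [if_pos hi, if_neg hj]
          have hne : i ≠ j := hij (by omega)
          have hσne : σ i ≠ σ j := fun h => hne (hσinj h)
          simp only [map_neg, LinearMap.neg_apply]
          rw [hb, hb, if_neg hσne, if_neg hne, neg_zero]
        · simp only [if_neg hi, if_pos hj]
          have hne : i ≠ j := hij (by omega)
          have hσne : σ i ≠ σ j := fun h => hne (hσinj h)
          simp only [map_neg, LinearMap.neg_apply]
          rw [hb, hb, if_neg hσne, if_neg hne, neg_zero]
        · simp only [if_neg hi, if_neg hj]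
          simp only [map_neg, LinearMap.neg_apply, neg_neg]
          rw [hb, hb]
          simp only [hσinj.eq_iff, hσlt]
      intro u v
      have heq : g.compl₁₂ C C = g :=
        b.ext fun i => b.ext fun j => by
          simpa [LinearMap.compl₁₂_apply] using hpair i j
      have := LinearMap.congr_fun (LinearMap.congr_fun heq u) v
      simpa [LinearMap.compl₁₂_apply] using this
end
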